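/- Let G be a finite simple graph containing no theta, pyramid, prism, or turtle as an induced subgraph, let H be a hole in G, and let u and v each be major for H or a clone of some vertex of H, such that u and v are nested with respect to H and uv ∈ E(G). Then u and v have a common neighbor in H. -/

import Mathlib

namespace Paper

open SimpleGraph

variable {V : Type*}

/-- The set of neighbors of `v` inside the set `H`. -/
def nbrsIn (G : SimpleGraph V) (v : V) (H : Set V) : Set V :=
  {u | u ∈ H ∧ G.Adj v u}

/-- The vertex set of a walk. -/
def supp {G : SimpleGraph V} {a b : V} (P : G.Walk a b) : Set V :=
  {v | v ∈ P.support}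

/-- `H` is a hole of `G`: an induced cycle of length at least 4.  (A finite
graph is a cycle iff it is connected and `2`-regular.) -/
def IsHole (G : SimpleGraph V) (H : Set V) : Prop :=
  H.Finite ∧ 4 ≤ H.ncard ∧ (G.induce H).Connected ∧
    ∀ v ∈ H, (nbrsIn G v H).ncard = 2

/-- `G` contains a theta as an induced subgraph. -/
def HasTheta (G : SimpleGraph V) : Prop :=
  ∃ (a b : V) (P₁ P₂ P₃ : G.Walk a b),
    a ≠ b ∧ ¬ G.Adj a b ∧
    P₁.IsPath ∧ P₂.IsPath ∧ P₃.IsPath ∧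
    2 ≤ P₁.length ∧ 2 ≤ P₂.length ∧ 2 ≤ P₃.length ∧
    (∀ v, v ∈ P₁.support → v ∈ P₂.support → v = a ∨ v = b) ∧
    (∀ v, v ∈ P₁.support → v ∈ P₃.support → v = a ∨ v = b) ∧
    (∀ v, v ∈ P₂.support → v ∈ P₃.support → v = a ∨ v = b) ∧
    IsHole G (supp P₁ ∪ supp P₂) ∧
    IsHole G (supp P₁ ∪ supp P₃) ∧
    IsHole G (supp P₂ ∪ supp P₃)

/-- `G` contains a pyramid as an induced subgraph. -/
def HasPyramid (G : SimpleGraph V) : Prop :=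
  ∃ (a b₁ b₂ b₃ : V) (P₁ : G.Walk a b₁) (P₂ : G.Walk a b₂) (P₃ : G.Walk a b₃),
    G.Adj b₁ b₂ ∧ G.Adj b₂ b₃ ∧ G.Adj b₁ b₃ ∧
    P₁.IsPath ∧ P₂.IsPath ∧ P₃.IsPath ∧
    (∀ v, v ∈ P₁.support → v ∈ P₂.support → v = a) ∧
    (∀ v, v ∈ P₁.support → v ∈ P₃.support → v = a) ∧
    (∀ v, v ∈ P₂.support → v ∈ P₃.support → v = a) ∧
    ¬ (P₁.length = 1 ∧ P₂.length = 1) ∧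
    ¬ (P₁.length = 1 ∧ P₃.length = 1) ∧
    ¬ (P₂.length = 1 ∧ P₃.length = 1) ∧
    IsHole G (supp P₁ ∪ supp P₂) ∧
    IsHole G (supp P₁ ∪ supp P₃) ∧
    IsHole G (supp P₂ ∪ supp P₃)

/-- `G` contains a prism as an induced subgraph. -/
def HasPrism (G : SimpleGraph V) : Prop :=
  ∃ (a₁ a₂ a₃ b₁ b₂ b₃ : V) (P₁ : G.Walk a₁ b₁) (P₂ : G.Walk a₂ b₂)
      (P₃ : G.Walk a₃ b₃),
    G.Adj a₁ a₂ ∧ G.Adj a₂ a₃ ∧ G.Adj a₁ a₃ ∧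
    G.Adj b₁ b₂ ∧ G.Adj b₂ b₃ ∧ G.Adj b₁ b₃ ∧
    P₁.IsPath ∧ P₂.IsPath ∧ P₃.IsPath ∧
    (∀ v, v ∈ P₁.support → v ∉ P₂.support) ∧
    (∀ v, v ∈ P₁.support → v ∉ P₃.support) ∧
    (∀ v, v ∈ P₂.support → v ∉ P₃.support) ∧
    IsHole G (supp P₁ ∪ supp P₂) ∧
    IsHole G (supp P₁ ∪ supp P₃) ∧
    IsHole G (supp P₂ ∪ supp P₃)

/-- `G` contains a turtle as an induced subgraph. -/
def HasTurtle (G : SimpleGraph V) : Prop :=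
  ∃ (a₁ b₁ a₂ b₂ x y : V) (P₁ : G.Walk a₁ b₁) (P₂ : G.Walk a₂ b₂),
    P₁.IsPath ∧ P₂.IsPath ∧
    (∀ v, v ∈ P₁.support → v ∉ P₂.support) ∧
    G.Adj a₁ a₂ ∧ G.Adj b₁ b₂ ∧ G.Adj x y ∧
    x ∉ P₁.support ∧ x ∉ P₂.support ∧ y ∉ P₁.support ∧ y ∉ P₂.support ∧
    IsHole G (supp P₁ ∪ supp P₂) ∧
    3 ≤ (nbrsIn G x (supp P₁)).ncard ∧
    (∀ v ∈ P₂.support, ¬ G.Adj x v) ∧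
    3 ≤ (nbrsIn G y (supp P₂)).ncard ∧
    (∀ v ∈ P₁.support, ¬ G.Adj y v)

/-- `G` contains no theta, pyramid, prism, or turtle as an induced subgraph. -/
def TPPTFree (G : SimpleGraph V) : Prop :=
  ¬ HasTheta G ∧ ¬ HasPyramid G ∧ ¬ HasPrism G ∧ ¬ HasTurtle G

/-- The neighborhood of a set `X`: all vertices outside `X` with a neighbor in `X`. -/
def setNbrs (G : SimpleGraph V) (X : Set V) : Set V :=
  {v | v ∉ X ∧ ∃ x ∈ X, G.Adj x v}

/-- `A` is a connected component of `G ∖ C`. -/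
def IsCompOf (G : SimpleGraph V) (C A : Set V) : Prop :=
  A.Nonempty ∧ Disjoint A C ∧ (G.induce A).Connected ∧
    ∀ a ∈ A, ∀ b : V, G.Adj a b → b ∉ C → b ∈ A

/-- `C` is a minimal separator of `G`: there are two distinct components `L`, `R`
of `G ∖ C` with `N(L) = N(R) = C`. -/
def IsMinSep (G : SimpleGraph V) (C : Set V) : Prop :=
  ∃ L R : Set V, IsCompOf G C L ∧ IsCompOf G C R ∧ L ≠ R ∧
    setNbrs G L = C ∧ setNbrs G R = C

/-- A proper separator: a minimal separator that is not a clique. -/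
def IsProperSep (G : SimpleGraph V) (C : Set V) : Prop :=
  IsMinSep G C ∧ ¬ (∀ a ∈ C, ∀ b ∈ C, a ≠ b → G.Adj a b)

/-- `u` is a minor vertex for the hole `H`: `u ∉ H`, `u` has a neighbor in `H` and
all its neighbors in `H` lie in a path of `H` with at most three vertices. -/
def IsMinorFor (G : SimpleGraph V) (u : V) (H : Set V) : Prop :=
  u ∉ H ∧ (nbrsIn G u H).Nonempty ∧
    ∃ a b c : V, a ∈ H ∧ b ∈ H ∧ c ∈ H ∧ G.Adj a b ∧ G.Adj b c ∧ a ≠ c ∧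
      nbrsIn G u H ⊆ {a, b, c}

/-- `u` is a major vertex for the hole `H`. -/
def IsMajorFor (G : SimpleGraph V) (u : V) (H : Set V) : Prop :=
  u ∉ H ∧ (nbrsIn G u H).Nonempty ∧ ¬ IsMinorFor G u H

/-- `u` is a pendant of `H`: it has a unique neighbor in `H`. -/
def IsPendant (G : SimpleGraph V) (u : V) (H : Set V) : Prop :=
  u ∉ H ∧ ∃ a : V, nbrsIn G u H = {a}

/-- `u` is a cap of `H`: it has exactly two neighbors in `H` and they are adjacent. -/
def IsCap (G : SimpleGraph V) (u : V) (H : Set V) : Prop :=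
  u ∉ H ∧ ∃ a b : V, a ≠ b ∧ G.Adj a b ∧ nbrsIn G u H = {a, b}

/-- `u` is a clone of `y` in `H`: its neighbors in `H` are exactly the three
vertices of a path `x-y-z` of `H`. -/
def IsCloneOf (G : SimpleGraph V) (u y : V) (H : Set V) : Prop :=
  u ∉ H ∧ ∃ x z : V, x ∈ H ∧ y ∈ H ∧ z ∈ H ∧ G.Adj x y ∧ G.Adj y z ∧ x ≠ z ∧
    nbrsIn G u H = {x, y, z}

/-- `u` is a clone (of some vertex) in `H`. -/
def IsClone (G : SimpleGraph V) (u : V) (H : Set V) : Prop :=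
  ∃ y, IsCloneOf G u y H

/-- `P` is a `u`-sector of the hole `H`: a path contained in `H` whose ends are
neighbors of `u` and whose interior is anticomplete to `u`. -/
def IsSector (G : SimpleGraph V) (u : V) (H : Set V) {a b : V} (P : G.Walk a b) : Prop :=
  P.IsPath ∧ (∀ v ∈ P.support, v ∈ H) ∧ G.Adj u a ∧ G.Adj u b ∧
    ∀ v ∈ P.support, v ≠ a → v ≠ b → ¬ G.Adj u v

/-- `u` and `v` are nested with respect to the hole `H`: there are distinct
`a, b ∈ H` such that one `ab`-path of `H` contains all neighbors of `u` in `H`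
and the other `ab`-path of `H` contains all neighbors of `v` in `H`. -/
def Nested (G : SimpleGraph V) (u v : V) (H : Set V) : Prop :=
  ∃ a b : V, a ∈ H ∧ b ∈ H ∧ a ≠ b ∧
    ∃ (P Q : G.Walk a b), P.IsPath ∧ Q.IsPath ∧
      supp P ∪ supp Q = H ∧
      (∀ x, x ∈ P.support → x ∈ Q.support → x = a ∨ x = b) ∧
      (∀ x ∈ H, G.Adj u x → x ∈ P.support) ∧
      (∀ x ∈ H, G.Adj v x → x ∈ Q.support)

/-- `u` is a hub for the hole `H`: its neighbors in `H` are exactly four vertices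
`p, q, r, s` appearing in that order along `H`, with `pq, rs ∈ E(G)` and
`ps, qr ∉ E(G)`. -/
def IsHub (G : SimpleGraph V) (u : V) (H : Set V) : Prop :=
  u ∉ H ∧ ∃ (p q r s : V) (A : G.Walk q r) (B : G.Walk s p),
    p ≠ q ∧ p ≠ r ∧ p ≠ s ∧ q ≠ r ∧ q ≠ s ∧ r ≠ s ∧
    nbrsIn G u H = {p, q, r, s} ∧
    G.Adj p q ∧ G.Adj r s ∧ ¬ G.Adj p s ∧ ¬ G.Adj q r ∧
    A.IsPath ∧ B.IsPath ∧
    (∀ v, v ∈ A.support → v ∉ B.support) ∧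
    supp A ∪ supp B = H

/-- `N` is an extended neighborhood of `w` in the hole `H`. -/
def IsExtNbhd (G : SimpleGraph V) (w : V) (H N : Set V) : Prop :=
  ∃ (x y x' y' : V) (Q : G.Walk x y),
    IsSector G w H Q ∧
    x' ∈ H ∧ x' ∉ Q.support ∧ G.Adj x' x ∧
    y' ∈ H ∧ y' ∉ Q.support ∧ G.Adj y' y ∧
    N = supp Q ∪ ({x', y'} ∩ nbrsIn G w H)

/-- `a` and `b` are distant in `H` with respect to `w`: no extended neighborhood
of `w` in `H` contains both `a` and `b`. -/
def Distant (G : SimpleGraph V) (w : V) (H : Set V) (a b : V) : Prop :=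
  a ∈ H ∧ b ∈ H ∧ ∀ N : Set V, IsExtNbhd G w H N → ¬ (a ∈ N ∧ b ∈ N)

/-- `P` is an `(H, w)`-significant path. -/
def IsSignificant (G : SimpleGraph V) (w : V) (H : Set V) {p q : V}
    (P : G.Walk p q) : Prop :=
  P.IsPath ∧ ∃ a b : V, a ∈ H ∧ G.Adj p a ∧ ¬ G.Adj w a ∧ b ∈ H ∧ G.Adj q b ∧
    Distant G w H a b

/-- `v` is a gem-center for the hole `H`. -/
def IsGemCenter (G : SimpleGraph V) (v : V) (H : Set V) : Prop :=
  5 ≤ H.ncard ∧ ∃ h₁ h₂ h₃ h₄ : V, h₁ ∈ H ∧ h₂ ∈ H ∧ h₃ ∈ H ∧ h₄ ∈ H ∧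
    G.Adj h₁ h₂ ∧ G.Adj h₂ h₃ ∧ G.Adj h₃ h₄ ∧ h₁ ≠ h₃ ∧ h₁ ≠ h₄ ∧ h₂ ≠ h₄ ∧
    nbrsIn G v H = {h₁, h₂, h₃, h₄}

/-- `x` is the center of a star cutset of `G`. -/
def IsStarCutsetCenter (G : SimpleGraph V) (x : V) : Prop :=
  ∃ X : Set V, x ∈ X ∧ (∀ y ∈ X, y ≠ x → G.Adj x y) ∧
    ¬ (G.induce (Xᶜ)).Preconnected

/-- `v` is `(c₁, c₂)`-heavy with respect to the hole `H`. -/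
def IsHeavy (G : SimpleGraph V) (c₁ c₂ : V) (H : Set V) (v : V) : Prop :=
  IsMajorFor G v H ∧ Distant G v H c₁ c₂

/-- The pair of paths `HL`, `HR` forms a `(C, c₁, c₂)`-hole with frame
`(c₁, c₂, ℓ₁', ℓ₁, r₁, r₁', ℓ₂', ℓ₂, r₂, r₂')`, where `L` and `R` are the two
full components of the proper separator `C`. -/
def IsCHoleWithFrame (G : SimpleGraph V) (C L R : Set V)
    (c₁ c₂ ℓ₁ ℓ₁' ℓ₂ ℓ₂' r₁ r₁' r₂ r₂' : V) (HL HR : G.Walk c₁ c₂) : Prop :=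
  HL.IsPath ∧ HR.IsPath ∧
  (∀ v, v ∈ HL.support → v ∈ HR.support → v = c₁ ∨ v = c₂) ∧
  IsHole G (supp HL ∪ supp HR) ∧
  c₁ ∈ C ∧ c₂ ∈ C ∧
  (∀ v, v ∈ HL.support → v ≠ c₁ → v ≠ c₂ → v ∈ L) ∧
  (∀ v, v ∈ HR.support → v ≠ c₁ → v ≠ c₂ → v ∈ R) ∧
  (supp HL ∪ supp HR) ∩ C = {c₁, c₂} ∧
  ℓ₁ ∈ HL.support ∧ ℓ₁ ≠ c₂ ∧ G.Adj c₁ ℓ₁ ∧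
  ℓ₂ ∈ HL.support ∧ ℓ₂ ≠ c₁ ∧ G.Adj c₂ ℓ₂ ∧
  r₁ ∈ HR.support ∧ r₁ ≠ c₂ ∧ G.Adj c₁ r₁ ∧
  r₂ ∈ HR.support ∧ r₂ ≠ c₁ ∧ G.Adj c₂ r₂ ∧
  ((ℓ₁ = ℓ₂ ∧ ℓ₁' = ℓ₁) ∨
    (ℓ₁ ≠ ℓ₂ ∧ ℓ₁' ∈ HL.support ∧ ℓ₁' ≠ c₁ ∧ ℓ₁' ≠ c₂ ∧ G.Adj ℓ₁ ℓ₁')) ∧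
  ((ℓ₁ = ℓ₂ ∧ ℓ₂' = ℓ₂) ∨
    (ℓ₁ ≠ ℓ₂ ∧ ℓ₂' ∈ HL.support ∧ ℓ₂' ≠ c₁ ∧ ℓ₂' ≠ c₂ ∧ G.Adj ℓ₂ ℓ₂')) ∧
  ((r₁ = r₂ ∧ r₁' = r₁) ∨
    (r₁ ≠ r₂ ∧ r₁' ∈ HR.support ∧ r₁' ≠ c₁ ∧ r₁' ≠ c₂ ∧ G.Adj r₁ r₁')) ∧
  ((r₁ = r₂ ∧ r₂' = r₂) ∨
    (r₁ ≠ r₂ ∧ r₂' ∈ HR.support ∧ r₂' ≠ c₁ ∧ r₂' ≠ c₂ ∧ G.Adj r₂ r₂'))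

/-- The 3-dimensional hypercube graph: vertices are elements of `{0,1}³`, two
vertices being adjacent exactly when they differ in one coordinate. -/
def cubeGraph : SimpleGraph (Fin 3 → Bool) where
  Adj x y := ∃! i, x i ≠ y i
  symm := by
    refine ⟨?_⟩
    rintro x y ⟨i, hi, hj⟩
    exact ⟨i, Ne.symm hi, fun j h => hj j (Ne.symm h)⟩
  loopless := by
    refine ⟨?_⟩
    rintro x ⟨i, hi, -⟩
    exact hi rfl


section Helpers

variable {G : SimpleGraph V}

lemma mem_supp_iff {a b : V} (P : G.Walk a b) (v : V) : v ∈ supp P ↔ v ∈ P.support := Iff.rfl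

lemma length_one_adj {x y : V} {W : G.Walk x y} (h : W.length = 1) : G.Adj x y := by
  cases W with
  | nil => simp at h
  | cons h' W' =>
    cases W' with
    | nil => exact h'
    | cons h'' W'' => simp [Walk.length_cons] at h

lemma path_nil_support {x : V} {W : G.Walk x x} (hW : W.IsPath) :
    W.support = [x] ∧ W.length = 0 := by
  cases W with
  | nil => simp
  | cons h' W' =>
    rw [Walk.cons_isPath_iff] at hW
    exact absurd W'.end_mem_support hW.2

lemma cons_decomp {x y : V} {W : G.Walk x y} (hW : W.IsPath) (hxy : x ≠ y) :
    ∃ (s : V) (_ : G.Adj x s) (W' : G.Walk s y), W'.IsPath ∧ x ∉ W'.support ∧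
      W.support = x :: W'.support ∧ W.length = W'.length + 1 := by
  cases W with
  | nil => exact absurd rfl hxy
  | cons h' W' =>
    rw [Walk.cons_isPath_iff] at hW
    exact ⟨_, h', W', hW.1, hW.2, by simp, by simp⟩

lemma cons_decomp' {x y : V} {W : G.Walk x y} (hW : W.IsPath) (hxy : x ≠ y) :
    ∃ (t : V) (_ : G.Adj y t) (W' : G.Walk x t), W'.IsPath ∧ y ∉ W'.support ∧
      W.support = W'.support ++ [y] ∧ W.length = W'.length + 1 := by
  obtain ⟨s, h, W₂, hp, hns, hsup, hlen⟩ := cons_decomp hW.reverse hxy.symm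
  refine ⟨s, h, W₂.reverse, hp.reverse, by simpa [Walk.support_reverse] using hns, ?_, ?_⟩
  · have h2 : W.support.reverse = y :: W₂.support := by
      rw [← Walk.support_reverse]; exact hsup
    have h3 := congrArg List.reverse h2
    simpa [Walk.support_reverse] using h3
  · simpa using hlen

lemma two_le_length {x y : V} {W : G.Walk x y} (hxy : x ≠ y) (hadj : ¬ G.Adj x y) :
    2 ≤ W.length := by
  rcases Nat.lt_or_ge W.length 2 with h | h
  · interval_cases h' : W.length
    · exact absurd (Walk.eq_of_length_eq_zero h') hxy
    · exact absurd (length_one_adj h') hadj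
  · exact h

lemma two_nbrs {x y : V} (W : G.Walk x y) :
    ∀ (_ : W.IsPath) (w : V) (_ : w ∈ W.support) (_ : w ≠ x) (_ : w ≠ y),
    ∃ s t, s ∈ W.support ∧ t ∈ W.support ∧ s ≠ t ∧ G.Adj w s ∧ G.Adj w t := by
  induction W with
  | nil =>
    intro _ w hw hwx _
    simp only [Walk.support_nil, List.mem_singleton] at hw
    exact absurd hw hwx
  | @cons a c y h' W' ih =>
    intro hW w hw hwx hwy
    rw [Walk.cons_isPath_iff] at hW
    have hw' : w ∈ W'.support := by
      rcases List.mem_cons.mp ((Walk.support_cons h' W') ▸ hw) with h | h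
      · exact absurd h hwx
      · exact h
    by_cases hwc : w = c
    · subst hwc
      obtain ⟨s, hadj, W'', hp, hns, hsup, hlen⟩ := cons_decomp hW.1 hwy
      refine ⟨a, s, Walk.start_mem_support _, ?_, ?_, h'.symm, hadj⟩
      · simp only [Walk.support_cons, List.mem_cons]
        right; rw [hsup]; right; exact Walk.start_mem_support _
      · intro has
        have hsW' : s ∈ W'.support := by
          rw [hsup]; exact List.mem_cons_of_mem _ (Walk.start_mem_support W'')
        rw [← has] at hsW'
        exact hW.2 hsW'
    · obtain ⟨s, t, hs, ht, hst, h1, h2⟩ := ih hW.1 w hw' hwc hwy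
      exact ⟨s, t, by simp [hs], by simp [ht], hst, h1, h2⟩

lemma supp_finite {x y : V} (W : G.Walk x y) : (supp W).Finite := by
  classical
  have : supp W = ↑W.support.toFinset := by ext z; simp [supp]
  rw [this]; exact (W.support.toFinset).finite_toSet

lemma supp_ncard {x y : V} {W : G.Walk x y} (hW : W.IsPath) :
    (supp W).ncard = W.length + 1 := by
  classical
  have h1 : supp W = ↑W.support.toFinset := by ext z; simp [supp]
  rw [h1, Set.ncard_coe_finset, List.toFinset_card_of_nodup hW.support_nodup,
    Walk.length_support]

lemma reachable_induce {S : Set V} {x y : V} (W : G.Walk x y)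
    (hW : ∀ v ∈ W.support, v ∈ S) :
    (G.induce S).Reachable ⟨x, hW _ W.start_mem_support⟩ ⟨y, hW _ W.end_mem_support⟩ := by
  induction W with
  | nil => rfl
  | @cons a c y h' W' ih =>
    have h1 : ∀ v ∈ W'.support, v ∈ S := fun v hv => hW v (by simp [hv])
    have hadj : (G.induce S).Adj ⟨a, hW _ (Walk.start_mem_support _)⟩
        ⟨c, h1 _ (Walk.start_mem_support _)⟩ := by
      simp only [comap_adj, Function.Embedding.coe_subtype]
      exact h'
    exact hadj.reachable.trans (by convert ih h1)


/-- The set of neighbors of `w` (in a hole `H`) is finite and we can use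
`ncard = 2` to pin it down. -/
lemma nbrs_eq_pair {H : Set V} (hH : IsHole G H) {w s t : V} (hw : w ∈ H)
    (hs : s ∈ H) (ht : t ∈ H) (hst : s ≠ t) (h1 : G.Adj w s) (h2 : G.Adj w t) :
    nbrsIn G w H = {s, t} := by
  have hfin : (nbrsIn G w H).Finite := hH.1.subset (fun z hz => hz.1)
  have hsub : ({s, t} : Set V) ⊆ nbrsIn G w H := by
    rintro z (rfl | rfl)
    · exact ⟨hs, h1⟩
    · exact ⟨ht, h2⟩
  have := Set.eq_of_subset_of_ncard_le hsub
    (by rw [hH.2.2.2 w hw, Set.ncard_pair hst]) hfin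
  exact this.symm

/-- Key hole-building lemma: a chordless path `T` in `H` together with a vertex `u`
adjacent exactly to its endpoints forms a hole. -/
lemma isHole_path_union {H : Set V} (hH : IsHole G H) {m n u : V}
    (T : G.Walk m n) (hT : T.IsPath) (hTH : ∀ w ∈ T.support, w ∈ H)
    (hlen : 2 ≤ T.length) (huH : u ∉ H) (hum : G.Adj u m) (hun : G.Adj u n)
    (hint : ∀ w ∈ T.support, G.Adj u w → w = m ∨ w = n)
    (hm' : ∃ m', m' ∈ H ∧ G.Adj m m' ∧ m' ∉ T.support)
    (hn' : ∃ n', n' ∈ H ∧ G.Adj n n' ∧ n' ∉ T.support) :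
    IsHole G (supp T ∪ {u}) := by
  classical
  obtain ⟨m', hm'H, hmm', hm'T⟩ := hm'
  obtain ⟨n', hn'H, hnn', hn'T⟩ := hn'
  have hmn : m ≠ n := by
    intro h
    subst h
    have := (path_nil_support hT).2
    omega
  have hmH : m ∈ H := hTH _ T.start_mem_support
  have hnH : n ∈ H := hTH _ T.end_mem_support
  obtain ⟨s, hms, Ws, hWs, hmWs, hsupS, hlenS⟩ := cons_decomp hT hmn
  obtain ⟨t, hnt, Wt, hWt, hnWt, hsupT, hlenT⟩ := cons_decomp' hT hmn
  have hsT : s ∈ T.support := by rw [hsupS]; exact List.mem_cons_of_mem _ (Walk.start_mem_support _)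
  have htT : t ∈ T.support := by rw [hsupT]; exact List.mem_append_left _ (Walk.end_mem_support _)
  have hsm : s ≠ m := fun h => hmWs (h ▸ Walk.start_mem_support Ws)
  have htn : t ≠ n := fun h => hnWt (h ▸ Walk.end_mem_support Wt)
  have hsn : s ≠ n := by
    intro h
    subst h
    obtain ⟨-, h0⟩ := path_nil_support hWs
    omega
  have htm : t ≠ m := by
    intro h
    subst h
    obtain ⟨-, h0⟩ := path_nil_support hWt
    omega
  set S : Set V := supp T ∪ {u} with hS
  have huT : u ∉ T.support := fun h => huH (hTH _ h)
  have hmS : m ∈ S := Or.inl T.start_mem_support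
  have hnS : n ∈ S := Or.inl T.end_mem_support
  have huS : u ∈ S := Or.inr rfl
  have hTfin := supp_finite T
  refine ⟨hTfin.union (Set.finite_singleton u), ?_, ?_, ?_⟩
  · -- ncard ≥ 4
    have h1 : S = insert u (supp T) := by rw [hS, Set.union_singleton]
    have huT' : u ∉ supp T := huT
    rw [h1, Set.ncard_insert_of_notMem huT' hTfin, supp_ncard hT]
    omega
  · -- connected
    rw [connected_iff]
    refine ⟨?_, ⟨⟨m, hmS⟩⟩⟩
    have key : ∀ z : ↥S, (G.induce S).Reachable z ⟨m, hmS⟩ := by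
      rintro ⟨z, hz | hz⟩
      · have hzT : z ∈ T.support := hz
        have hsub : ∀ v ∈ (T.takeUntil z hzT).support, v ∈ S :=
          fun v hv => Or.inl (T.support_takeUntil_subset hzT hv)
        exact (reachable_induce (T.takeUntil z hzT) hsub).symm
      · have hz' : z = u := hz
        subst hz'
        have hadj : (G.induce S).Adj ⟨z, Or.inr rfl⟩ ⟨m, hmS⟩ := by
          simp only [comap_adj, Function.Embedding.coe_subtype]
          exact hum
        exact hadj.reachable
    intro z w
    exact (key z).trans (key w).symm
  · -- 2-regular
    rintro w (hwT | hwu)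
    · by_cases hwm : w = m
      · subst hwm
        have hpair : nbrsIn G w H = {s, m'} :=
          nbrs_eq_pair hH hmH (hTH _ hsT) hm'H
            (fun h => hm'T (h ▸ hsT)) hms hmm'
        have : nbrsIn G w S = {s, u} := by
          ext z
          constructor
          · rintro ⟨hz | hz, hadj⟩
            · have hzH : z ∈ H := hTH _ hz
              have : z ∈ nbrsIn G w H := ⟨hzH, hadj⟩
              rw [hpair] at this
              rcases this with rfl | rfl
              · exact Or.inl rfl
              · exact absurd hz hm'T
            · exact Or.inr hz
          · rintro (rfl | rfl)
            · exact ⟨Or.inl hsT, hms⟩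
            · exact ⟨Or.inr rfl, hum.symm⟩
        rw [this, Set.ncard_pair (by rintro rfl; exact huH (hTH _ hsT))]
      · by_cases hwn : w = n
        · subst hwn
          have hpair : nbrsIn G w H = {t, n'} :=
            nbrs_eq_pair hH hnH (hTH _ htT) hn'H
              (fun h => hn'T (h ▸ htT)) hnt hnn'
          have : nbrsIn G w S = {t, u} := by
            ext z
            constructor
            · rintro ⟨hz | hz, hadj⟩
              · have : z ∈ nbrsIn G w H := ⟨hTH _ hz, hadj⟩
                rw [hpair] at this
                rcases this with rfl | rfl
                · exact Or.inl rfl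
                · exact absurd hz hn'T
              · exact Or.inr hz
            · rintro (rfl | rfl)
              · exact ⟨Or.inl htT, hnt⟩
              · exact ⟨Or.inr rfl, hun.symm⟩
          rw [this, Set.ncard_pair (by rintro rfl; exact huH (hTH _ htT))]
        · obtain ⟨p, q, hp, hq, hpq, h1, h2⟩ := two_nbrs T hT w hwT hwm hwn
          have hpair : nbrsIn G w H = {p, q} :=
            nbrs_eq_pair hH (hTH _ hwT) (hTH _ hp) (hTH _ hq) hpq h1 h2
          have : nbrsIn G w S = {p, q} := by
            ext z
            constructor
            · rintro ⟨hz | hz, hadj⟩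
              · have : z ∈ nbrsIn G w H := ⟨hTH _ hz, hadj⟩
                rw [hpair] at this
                exact this
              · exfalso
                have hz' : z = u := hz
                subst hz'
                rcases hint w hwT hadj.symm with rfl | rfl
                · exact hwm rfl
                · exact hwn rfl
            · rintro (rfl | rfl)
              · exact ⟨Or.inl hp, h1⟩
              · exact ⟨Or.inl hq, h2⟩
          rw [this, Set.ncard_pair hpq]
    · have hw' : w = u := hwu
      subst hw'
      have : nbrsIn G w S = {m, n} := by
        ext z
        constructor
        · rintro ⟨hz | hz, hadj⟩
          · exact hint z hz hadj
          · rw [Set.mem_singleton_iff] at hz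
            subst hz
            exact absurd hadj (G.loopless.irrefl _)
        · rintro (rfl | rfl)
          · exact ⟨hmS, hum⟩
          · exact ⟨hnS, hun⟩
      rw [this, Set.ncard_pair hmn]


lemma hasTheta_ordered {H : Set V} (hH : IsHole G H) {a b u m n : V}
    (Ta : G.Walk a m) (T1 : G.Walk m n) (tl : G.Walk n b) (Q : G.Walk a b)
    (hP : (Ta.append (T1.append tl)).IsPath) (hQ : Q.IsPath)
    (hPQ : ∀ x, x ∈ (Ta.append (T1.append tl)).support → x ∈ Q.support → x = a ∨ x = b)
    (hunion : supp (Ta.append (T1.append tl)) ∪ supp Q = H)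
    (huH : u ∉ H) (hNu : nbrsIn G u H = {m, n}) (hmn : m ≠ n)
    (hnadj : ¬ G.Adj m n) (hum : G.Adj u m) (hun2 : G.Adj u n) :
    HasTheta G := by
  classical
  set P := Ta.append (T1.append tl) with hPdef
  have hInner : (T1.append tl).IsPath := hP.of_append_right
  have hTa : Ta.IsPath := hP.of_append_left
  have hT1 : T1.IsPath := hInner.of_append_left
  have htl : tl.IsPath := hInner.of_append_right
  have memP : ∀ {v : V}, v ∈ P.support ↔
      v ∈ Ta.support ∨ v ∈ T1.support ∨ v ∈ tl.support := by
    intro v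
    rw [hPdef, Walk.mem_support_append_iff, Walk.mem_support_append_iff]
  -- F1
  have F1 : ∀ v, v ∈ Ta.support → v ∈ (T1.append tl).support → v = m := by
    intro v h1 h2
    have hnd : (Ta.support ++ (T1.append tl).support.tail).Nodup := by
      rw [← Walk.support_append]
      exact hP.support_nodup
    rw [Walk.support_eq_cons (T1.append tl)] at h2
    rcases List.mem_cons.mp h2 with h2 | h2
    · exact h2
    · exact absurd h2 (List.disjoint_of_nodup_append hnd h1)
  have F2 : ∀ v, v ∈ T1.support → v ∈ tl.support → v = n := by
    intro v h1 h2
    have hnd : (T1.support ++ tl.support.tail).Nodup := by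
      rw [← Walk.support_append]
      exact hInner.support_nodup
    rw [Walk.support_eq_cons tl] at h2
    rcases List.mem_cons.mp h2 with h2 | h2
    · exact h2
    · exact absurd h2 (List.disjoint_of_nodup_append hnd h1)
  have hmb : m ≠ b := by
    intro h
    have : m ∈ tl.support := h ▸ tl.end_mem_support
    exact hmn (F2 m T1.start_mem_support this)
  have hna : n ≠ a := by
    intro h
    have h1 : n ∈ Ta.support := h ▸ Ta.start_mem_support
    have h2 : n ∈ (T1.append tl).support := by
      rw [Walk.mem_support_append_iff]; exact Or.inl T1.end_mem_support
    exact hmn (F1 n h1 h2).symm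
  have hbTa : b ∉ Ta.support := by
    intro h
    have h2 : b ∈ (T1.append tl).support := by
      rw [Walk.mem_support_append_iff]; exact Or.inr tl.end_mem_support
    exact hmb (F1 b h h2).symm
  have hPH : ∀ v ∈ P.support, v ∈ H := by
    intro v h
    have : v ∈ supp P ∪ supp Q := Or.inl h
    rwa [hunion] at this
  have hQH : ∀ v ∈ Q.support, v ∈ H := by
    intro v h
    have : v ∈ supp P ∪ supp Q := Or.inr h
    rwa [hunion] at this
  have hmH : m ∈ H := hPH m (memP.mpr (Or.inr (Or.inl T1.start_mem_support)))
  have hnH : n ∈ H := hPH n (memP.mpr (Or.inr (Or.inl T1.end_mem_support)))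
  have hT1H : ∀ w ∈ T1.support, w ∈ H :=
    fun w h => hPH w (memP.mpr (Or.inr (Or.inl h)))
  -- T2
  set T2 : G.Walk m n := Ta.reverse.append (Q.append tl.reverse) with hT2def
  have memT2 : ∀ {v : V}, v ∈ T2.support ↔
      v ∈ Ta.support ∨ v ∈ Q.support ∨ v ∈ tl.support := by
    intro v
    rw [hT2def, Walk.mem_support_append_iff, Walk.mem_support_append_iff,
      Walk.support_reverse, Walk.support_reverse, List.mem_reverse, List.mem_reverse]
  have hT2H : ∀ w ∈ T2.support, w ∈ H := by
    intro w h
    rcases memT2.mp h with h | h | h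
    · exact hPH w (memP.mpr (Or.inl h))
    · exact hQH w h
    · exact hPH w (memP.mpr (Or.inr (Or.inr h)))
  -- nodup pieces
  have hQnd := hQ.support_nodup
  have hQcons := Walk.support_eq_cons Q
  have haQt : a ∉ Q.support.tail := by
    intro h
    rw [hQcons] at hQnd
    exact (List.nodup_cons.mp hQnd).1 h
  have hQtnd : Q.support.tail.Nodup := by
    rw [hQcons] at hQnd
    exact (List.nodup_cons.mp hQnd).2
  have htlrev := htl.reverse.support_nodup
  have htlcons := Walk.support_eq_cons tl.reverse
  have hbtl : b ∉ tl.reverse.support.tail := by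
    rw [htlcons] at htlrev
    exact (List.nodup_cons.mp htlrev).1
  have htltnd : tl.reverse.support.tail.Nodup := by
    rw [htlcons] at htlrev
    exact (List.nodup_cons.mp htlrev).2
  have htlrevmem : ∀ {v : V}, v ∈ tl.reverse.support.tail → v ∈ tl.support ∧ v ≠ b := by
    intro v h
    constructor
    · have : v ∈ tl.reverse.support := by rw [htlcons]; exact List.mem_cons_of_mem _ h
      rwa [Walk.support_reverse, List.mem_reverse] at this
    · intro hvb
      exact hbtl (hvb ▸ h)
  have hQtmem : ∀ {v : V}, v ∈ Q.support.tail → v ∈ Q.support ∧ v ≠ a := by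
    intro v h
    constructor
    · rw [hQcons]; exact List.mem_cons_of_mem _ h
    · intro hva
      exact haQt (hva ▸ h)
  have hT2path : T2.IsPath := by
    rw [Walk.isPath_def, hT2def, Walk.support_append, Walk.tail_support_append,
      Walk.support_reverse]
    rw [List.nodup_append]
    refine ⟨List.nodup_reverse.mpr hTa.support_nodup, ?_, ?_⟩
    · rw [List.nodup_append]
      refine ⟨hQtnd, htltnd, ?_⟩
      intro v hv w hv' hvw
      subst hvw
      obtain ⟨hvQ, hva⟩ := hQtmem hv
      obtain ⟨hvtl, hvb⟩ := htlrevmem hv'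
      rcases hPQ v (memP.mpr (Or.inr (Or.inr hvtl))) hvQ with h | h
      · exact hva h
      · exact hvb h
    · intro v hv w hv' hvw
      subst hvw
      rw [List.mem_reverse] at hv
      rcases List.mem_append.mp hv' with h | h
      · obtain ⟨hvQ, hva⟩ := hQtmem h
        rcases hPQ v (memP.mpr (Or.inl hv)) hvQ with h' | h'
        · exact hva h'
        · exact hbTa (h' ▸ hv)
      · obtain ⟨hvtl, hvb⟩ := htlrevmem h
        have hvm := F1 v hv (by rw [Walk.mem_support_append_iff]; exact Or.inr hvtl)
        subst hvm
        exact hmn (F2 v T1.start_mem_support hvtl)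
  -- disjointness T1 vs T2
  have hdisj12 : ∀ v, v ∈ T1.support → v ∈ T2.support → v = m ∨ v = n := by
    intro v h1 h2
    rcases memT2.mp h2 with h | h | h
    · exact Or.inl (F1 v h (by rw [Walk.mem_support_append_iff]; exact Or.inl h1))
    · rcases hPQ v (memP.mpr (Or.inr (Or.inl h1))) h with rfl | rfl
      · exact Or.inl (F1 v Ta.start_mem_support
          (by rw [Walk.mem_support_append_iff]; exact Or.inl h1))
      · exact Or.inr (F2 v h1 tl.end_mem_support)
    · exact Or.inr (F2 v h1 h)
  -- T3
  have humm : u ≠ m := fun h => huH (h ▸ hmH)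
  have hunn : u ≠ n := fun h => huH (h ▸ hnH)
  set T3 : G.Walk m n := Walk.cons hum.symm (Walk.cons hun2 Walk.nil) with hT3def
  have hT3sup : T3.support = [m, u, n] := by simp [hT3def]
  have hT3path : T3.IsPath := by
    rw [Walk.isPath_def, hT3sup]
    simp [hmn, humm.symm, hunn]
  have hT3len : T3.length = 2 := by simp [hT3def]
  have hlen1 : 2 ≤ T1.length := two_le_length hmn hnadj
  have hlen2 : 2 ≤ T2.length := two_le_length hmn hnadj
  -- snds
  obtain ⟨s1, hms1, W1, hW1, hmW1, hsup1, hlength1⟩ := cons_decomp hT1 hmn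
  obtain ⟨t1, hnt1, W1', hW1', hnW1', hsup1', hlength1'⟩ := cons_decomp' hT1 hmn
  obtain ⟨s2, hms2, W2, hW2, hmW2, hsup2, hlength2⟩ := cons_decomp hT2path hmn
  obtain ⟨t2, hnt2, W2', hW2', hnW2', hsup2', hlength2'⟩ := cons_decomp' hT2path hmn
  have hs1T1 : s1 ∈ T1.support := by
    rw [hsup1]; exact List.mem_cons_of_mem _ (Walk.start_mem_support _)
  have ht1T1 : t1 ∈ T1.support := by
    rw [hsup1']; exact List.mem_append_left _ (Walk.end_mem_support _)
  have hs2T2 : s2 ∈ T2.support := by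
    rw [hsup2]; exact List.mem_cons_of_mem _ (Walk.start_mem_support _)
  have ht2T2 : t2 ∈ T2.support := by
    rw [hsup2']; exact List.mem_append_left _ (Walk.end_mem_support _)
  have hs1m : s1 ≠ m := fun h => hmW1 (h ▸ Walk.start_mem_support W1)
  have hs1n : s1 ≠ n := by
    intro h
    subst h
    obtain ⟨-, h0⟩ := path_nil_support hW1
    omega
  have ht1n : t1 ≠ n := fun h => hnW1' (h ▸ Walk.end_mem_support W1')
  have ht1m : t1 ≠ m := by
    intro h
    subst h
    obtain ⟨-, h0⟩ := path_nil_support hW1'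
    omega
  have hs2m : s2 ≠ m := fun h => hmW2 (h ▸ Walk.start_mem_support W2)
  have hs2n : s2 ≠ n := by
    intro h
    subst h
    obtain ⟨-, h0⟩ := path_nil_support hW2
    omega
  have ht2n : t2 ≠ n := fun h => hnW2' (h ▸ Walk.end_mem_support W2')
  have ht2m : t2 ≠ m := by
    intro h
    subst h
    obtain ⟨-, h0⟩ := path_nil_support hW2'
    omega
  have hs2T1 : s2 ∉ T1.support := by
    intro h
    rcases hdisj12 s2 h hs2T2 with h' | h'
    · exact hs2m h'
    · exact hs2n h'
  have ht2T1 : t2 ∉ T1.support := by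
    intro h
    rcases hdisj12 t2 h ht2T2 with h' | h'
    · exact ht2m h'
    · exact ht2n h'
  have hs1T2 : s1 ∉ T2.support := by
    intro h
    rcases hdisj12 s1 hs1T1 h with h' | h'
    · exact hs1m h'
    · exact hs1n h'
  have ht1T2 : t1 ∉ T2.support := by
    intro h
    rcases hdisj12 t1 ht1T1 h with h' | h'
    · exact ht1m h'
    · exact ht1n h'
  -- neighbor characterization
  have hadj_mem : ∀ w, w ∈ H → G.Adj u w → w = m ∨ w = n := by
    intro w hw hadj
    have : w ∈ nbrsIn G u H := ⟨hw, hadj⟩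
    rw [hNu] at this
    exact this
  -- hole C
  have HC : supp T1 ∪ supp T2 = H := by
    ext v
    constructor
    · rintro (h | h)
      · exact hT1H v h
      · exact hT2H v h
    · intro h
      have : v ∈ supp P ∪ supp Q := by rw [hunion]; exact h
      rcases this with h' | h'
      · rcases memP.mp h' with h'' | h'' | h''
        · exact Or.inr (memT2.mpr (Or.inl h''))
        · exact Or.inl h''
        · exact Or.inr (memT2.mpr (Or.inr (Or.inr h'')))
      · exact Or.inr (memT2.mpr (Or.inr (Or.inl h')))
  have holeC : IsHole G (supp T1 ∪ supp T2) := by rw [HC]; exact hH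
  -- hole A
  have HAeq : supp T1 ∪ supp T3 = supp T1 ∪ {u} := by
    ext v
    simp only [supp, Set.mem_union, Set.mem_setOf_eq, Set.mem_singleton_iff, hT3sup]
    constructor
    · rintro (h | h)
      · exact Or.inl h
      · simp only [List.mem_cons, List.not_mem_nil, or_false] at h
        rcases h with rfl | rfl | rfl
        · exact Or.inl T1.start_mem_support
        · exact Or.inr rfl
        · exact Or.inl T1.end_mem_support
    · rintro (h | rfl)
      · exact Or.inl h
      · exact Or.inr (by simp)
  have holeA : IsHole G (supp T1 ∪ supp T3) := by
    rw [HAeq]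
    refine isHole_path_union hH T1 hT1 hT1H hlen1 huH hum hun2 ?_ ?_ ?_
    · intro w hw hadj
      exact hadj_mem w (hT1H w hw) hadj
    · exact ⟨s2, hT2H s2 hs2T2, hms2, hs2T1⟩
    · exact ⟨t2, hT2H t2 ht2T2, hnt2, ht2T1⟩
  -- hole B
  have HBeq : supp T2 ∪ supp T3 = supp T2 ∪ {u} := by
    ext v
    simp only [supp, Set.mem_union, Set.mem_setOf_eq, Set.mem_singleton_iff, hT3sup]
    constructor
    · rintro (h | h)
      · exact Or.inl h
      · simp only [List.mem_cons, List.not_mem_nil, or_false] at h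
        rcases h with rfl | rfl | rfl
        · exact Or.inl (T2.start_mem_support)
        · exact Or.inr rfl
        · exact Or.inl (T2.end_mem_support)
    · rintro (h | rfl)
      · exact Or.inl h
      · exact Or.inr (by simp)
  have holeB : IsHole G (supp T2 ∪ supp T3) := by
    rw [HBeq]
    refine isHole_path_union hH T2 hT2path hT2H hlen2 huH hum hun2 ?_ ?_ ?_
    · intro w hw hadj
      exact hadj_mem w (hT2H w hw) hadj
    · exact ⟨s1, hT1H s1 hs1T1, hms1, hs1T2⟩
    · exact ⟨t1, hT1H t1 ht1T1, hnt1, ht1T2⟩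
  -- disjointness with T3
  have hdisj13 : ∀ v, v ∈ T1.support → v ∈ T3.support → v = m ∨ v = n := by
    intro v h1 h3
    rw [hT3sup] at h3
    simp only [List.mem_cons, List.not_mem_nil, or_false] at h3
    rcases h3 with rfl | rfl | rfl
    · exact Or.inl rfl
    · exact absurd (hT1H v h1) huH
    · exact Or.inr rfl
  have hdisj23 : ∀ v, v ∈ T2.support → v ∈ T3.support → v = m ∨ v = n := by
    intro v h1 h3
    rw [hT3sup] at h3
    simp only [List.mem_cons, List.not_mem_nil, or_false] at h3
    rcases h3 with rfl | rfl | rfl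
    · exact Or.inl rfl
    · exact absurd (hT2H v h1) huH
    · exact Or.inr rfl
  exact ⟨m, n, T1, T2, T3, hmn, hnadj, hT1, hT2path, hT3path, hlen1, hlen2,
    by rw [hT3len], hdisj12, hdisj13, hdisj23, holeC, holeA, holeB⟩


lemma hasTheta_of_two {H : Set V} (hH : IsHole G H) {a b u m n : V}
    (P Q : G.Walk a b) (hP : P.IsPath) (hQ : Q.IsPath)
    (hPQ : ∀ x, x ∈ P.support → x ∈ Q.support → x = a ∨ x = b)
    (hunion : supp P ∪ supp Q = H)
    (huH : u ∉ H) (hNu : nbrsIn G u H = {m, n}) (hmn : m ≠ n)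
    (hnadj : ¬ G.Adj m n) (hum : G.Adj u m) (hun2 : G.Adj u n)
    (hmP : m ∈ P.support) (hnP : n ∈ P.support) :
    HasTheta G := by
  classical
  obtain ⟨q, r, rfl⟩ := Walk.mem_support_iff_exists_append.mp hmP
  rcases (Walk.mem_support_append_iff q r).mp hnP with hn | hn
  · -- n occurs in q : a → m, so n comes before m; use order (n, m)
    obtain ⟨q1, q2, rfl⟩ := Walk.mem_support_iff_exists_append.mp hn
    have heq : (q1.append q2).append r = q1.append (q2.append r) :=
      (Walk.append_assoc q1 q2 r).symm
    rw [heq] at hP hPQ hunion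
    exact hasTheta_ordered hH q1 q2 r Q hP hQ hPQ hunion huH
      (by rw [hNu]; exact Set.pair_comm m n) hmn.symm
      (fun h => hnadj h.symm) hun2 hum
  · obtain ⟨r1, r2, rfl⟩ := Walk.mem_support_iff_exists_append.mp hn
    exact hasTheta_ordered hH q r1 r2 Q hP hQ hPQ hunion huH hNu hmn hnadj hum hun2


lemma nbrs_ge_three {H : Set V} (hθ : ¬ HasTheta G) (hH : IsHole G H) {a b u : V}
    (P Q : G.Walk a b) (hP : P.IsPath) (hQ : Q.IsPath)
    (hPQ : ∀ x, x ∈ P.support → x ∈ Q.support → x = a ∨ x = b)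
    (hunion : supp P ∪ supp Q = H)
    (hu : IsMajorFor G u H ∨ IsClone G u H)
    (hNuP : ∀ x ∈ H, G.Adj u x → x ∈ P.support) :
    3 ≤ (nbrsIn G u H).ncard := by
  have hfin : (nbrsIn G u H).Finite := hH.1.subset (fun z hz => hz.1)
  rcases hu with hu | hu
  swap
  · obtain ⟨y, huH, x, z, hx, hy, hz, hxy, hyz, hxz, heq⟩ := hu
    rw [heq]
    have hxy' : x ≠ y := hxy.ne
    have hyz' : y ≠ z := hyz.ne
    rw [Set.ncard_eq_three.mpr ⟨x, y, z, hxy', hxz, hyz', rfl⟩]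
  · obtain ⟨huH, hne, hnm⟩ := hu
    by_contra hlt
    push_neg at hlt
    have hpos : 1 ≤ (nbrsIn G u H).ncard := by
      rw [Nat.one_le_iff_ne_zero]
      intro h0
      rw [Set.ncard_eq_zero hfin] at h0
      rw [h0] at hne
      exact Set.not_nonempty_empty hne
    interval_cases hc : (nbrsIn G u H).ncard
    · -- exactly one neighbor
      obtain ⟨m, hm⟩ := Set.ncard_eq_one.mp hc
      have hmm : m ∈ nbrsIn G u H := by rw [hm]; rfl
      obtain ⟨hmH, humadj⟩ := hmm
      obtain ⟨s, t, hst, hpair⟩ := Set.ncard_eq_two.mp (hH.2.2.2 m hmH)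
      have hs : s ∈ nbrsIn G m H := by rw [hpair]; exact Or.inl rfl
      have ht : t ∈ nbrsIn G m H := by rw [hpair]; exact Or.inr rfl
      exact hnm ⟨huH, hne, s, m, t, hs.1, hmH, ht.1, hs.2.symm, ht.2, hst,
        by rw [hm]; exact fun z hz => by rw [hz]; exact Or.inr (Or.inl rfl)⟩
    · -- exactly two neighbors
      obtain ⟨m, n, hmn, hmn2⟩ := Set.ncard_eq_two.mp hc
      have hmm : m ∈ nbrsIn G u H := by rw [hmn2]; exact Or.inl rfl
      have hnn : n ∈ nbrsIn G u H := by rw [hmn2]; exact Or.inr rfl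
      obtain ⟨hmH, hum⟩ := hmm
      obtain ⟨hnH, hun⟩ := hnn
      by_cases hadj : G.Adj m n
      · -- m and n adjacent: minor via n's other neighbor
        obtain ⟨s, t, hst, hpair⟩ := Set.ncard_eq_two.mp (hH.2.2.2 n hnH)
        have hmem : m ∈ nbrsIn G n H := ⟨hmH, hadj.symm⟩
        rw [hpair] at hmem
        have hs : s ∈ nbrsIn G n H := by rw [hpair]; exact Or.inl rfl
        have ht : t ∈ nbrsIn G n H := by rw [hpair]; exact Or.inr rfl
        rcases hmem with rfl | rfl
        · exact hnm ⟨huH, hne, m, n, t, hmH, hnH, ht.1, hadj, ht.2, hst,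
            by rw [hmn2]; rintro z (rfl | rfl)
               · exact Or.inl rfl
               · exact Or.inr (Or.inl rfl)⟩
        · exact hnm ⟨huH, hne, m, n, s, hmH, hnH, hs.1, hadj, hs.2, hst.symm,
            by rw [hmn2]; rintro z (rfl | rfl)
               · exact Or.inl rfl
               · exact Or.inr (Or.inl rfl)⟩
      · by_cases hcm : ∃ w ∈ H, G.Adj m w ∧ G.Adj w n
        · obtain ⟨w, hwH, h1, h2⟩ := hcm
          exact hnm ⟨huH, hne, m, w, n, hmH, hwH, hnH, h1, h2, hmn,
            by rw [hmn2]; rintro z (rfl | rfl)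
               · exact Or.inl rfl
               · exact Or.inr (Or.inr rfl)⟩
        · exact hθ (hasTheta_of_two hH P Q hP hQ hPQ hunion huH hmn2 hmn hadj
            hum hun (hNuP m hmH hum) (hNuP n hnH hun))


lemma trim {a b : V} (P : G.Walk a b) (hP : P.IsPath) (hab : a ≠ b) (kA kB : Bool)
    (hlen : kA = false → kB = false → ∃ w, w ∈ P.support ∧ w ≠ a ∧ w ≠ b) :
    ∃ (a1 b1 : V) (P1 : G.Walk a1 b1), P1.IsPath ∧
      (∀ w, w ∈ P1.support ↔ (w ∈ P.support ∧ (kA = false → w ≠ a) ∧ (kB = false → w ≠ b))) ∧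
      (kA = true → a1 = a) ∧ (kA = false → G.Adj a a1) ∧
      (kB = true → b1 = b) ∧ (kB = false → G.Adj b b1) := by
  cases kA
  · cases kB
    · -- trim both ends
      obtain ⟨s, hs, P', hP', haP', hsup, -⟩ := cons_decomp hP hab
      have hsb : s ≠ b := by
        intro h
        subst h
        obtain ⟨w, hw, hwa, hwb⟩ := hlen rfl rfl
        obtain ⟨h1, -⟩ := path_nil_support hP'
        rw [hsup, h1] at hw
        simp only [List.mem_cons, List.mem_singleton, List.not_mem_nil, or_false] at hw
        rcases hw with rfl | rfl
        · exact hwa rfl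
        · exact hwb rfl
      obtain ⟨t, ht, P'', hP'', hbP'', hsup', -⟩ := cons_decomp' hP' hsb
      refine ⟨s, t, P'', hP'', ?_, by simp, fun _ => hs, by simp, fun _ => ht⟩
      intro w
      constructor
      · intro hw
        refine ⟨by rw [hsup, hsup']; exact List.mem_cons_of_mem _ (List.mem_append_left _ hw),
          ?_, ?_⟩
        · intro _ hwa
          subst hwa
          exact haP' (by rw [hsup']; exact List.mem_append_left _ hw)
        · intro _ hwb
          subst hwb
          exact hbP'' hw
      · rintro ⟨hw, h1, h2⟩
        rw [hsup, hsup'] at hw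
        rcases List.mem_cons.mp hw with hw | hw
        · exact absurd hw (h1 rfl)
        · rcases List.mem_append.mp hw with hw | hw
          · exact hw
          · rw [List.mem_singleton] at hw
            exact absurd hw (h2 rfl)
    · -- trim only a
      obtain ⟨s, hs, P', hP', haP', hsup, -⟩ := cons_decomp hP hab
      refine ⟨s, b, P', hP', ?_, by simp, fun _ => hs, fun h => rfl, by simp⟩
      intro w
      constructor
      · intro hw
        refine ⟨by rw [hsup]; exact List.mem_cons_of_mem _ hw, ?_, by simp⟩
        intro _ hwa
        subst hwa
        exact haP' hw
      · rintro ⟨hw, h1, -⟩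
        rw [hsup] at hw
        rcases List.mem_cons.mp hw with hw | hw
        · exact absurd hw (h1 rfl)
        · exact hw
  · cases kB
    · -- trim only b
      obtain ⟨t, ht, P', hP', hbP', hsup, -⟩ := cons_decomp' hP hab
      refine ⟨a, t, P', hP', ?_, fun _ => rfl, by simp, by simp, fun _ => ht⟩
      intro w
      constructor
      · intro hw
        refine ⟨by rw [hsup]; exact List.mem_append_left _ hw, by simp, ?_⟩
        intro _ hwb
        subst hwb
        exact hbP' hw
      · rintro ⟨hw, -, h2⟩
        rw [hsup] at hw
        rcases List.mem_append.mp hw with hw | hw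
        · exact hw
        · rw [List.mem_singleton] at hw
          exact absurd hw (h2 rfl)
    · exact ⟨a, b, P, hP, by simp, fun _ => rfl, by simp, fun _ => rfl, by simp⟩


lemma hasTurtle_main {H : Set V} (hH : IsHole G H) {a b u v : V}
    (P Q : G.Walk a b) (hP : P.IsPath) (hQ : Q.IsPath) (hab : a ≠ b)
    (hPQ : ∀ x, x ∈ P.support → x ∈ Q.support → x = a ∨ x = b)
    (hunion : supp P ∪ supp Q = H)
    (huH : u ∉ H) (hvH : v ∉ H) (huv : G.Adj u v)
    (hNuP : ∀ x ∈ H, G.Adj u x → x ∈ P.support)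
    (hNvQ : ∀ x ∈ H, G.Adj v x → x ∈ Q.support)
    (hNu3 : 3 ≤ (nbrsIn G u H).ncard) (hNv3 : 3 ≤ (nbrsIn G v H).ncard)
    (kA kB : Bool)
    (hA1 : kA = true → ¬ G.Adj v a) (hA2 : kA = false → ¬ G.Adj u a)
    (hB1 : kB = true → ¬ G.Adj v b) (hB2 : kB = false → ¬ G.Adj u b) :
    HasTurtle G := by
  classical
  have hufin : (nbrsIn G u H).Finite := hH.1.subset (fun z hz => hz.1)
  have hvfin : (nbrsIn G v H).Finite := hH.1.subset (fun z hz => hz.1)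
  have hune : (nbrsIn G u H).Nonempty := by
    rw [← Set.ncard_pos hufin]; omega
  have hvne : (nbrsIn G v H).Nonempty := by
    rw [← Set.ncard_pos hvfin]; omega
  -- trim P
  obtain ⟨a1, b1, P1, hP1, hmemP1, hP1a, hP1a', hP1b, hP1b'⟩ :=
    trim P hP hab kA kB (by
      intro h1 h2
      obtain ⟨w, hwH, hwadj⟩ := hune
      refine ⟨w, hNuP w hwH hwadj, ?_, ?_⟩
      · rintro rfl; exact hA2 h1 hwadj
      · rintro rfl; exact hB2 h2 hwadj)
  -- trim Q
  obtain ⟨a2, b2, Q1, hQ1, hmemQ1, hQ1a, hQ1a', hQ1b, hQ1b'⟩ :=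
    trim Q hQ hab (!kA) (!kB) (by
      intro h1 h2
      rw [Bool.not_eq_false'] at h1 h2
      obtain ⟨w, hwH, hwadj⟩ := hvne
      refine ⟨w, hNvQ w hwH hwadj, ?_, ?_⟩
      · rintro rfl; exact hA1 h1 hwadj
      · rintro rfl; exact hB1 h2 hwadj)
  have hP1P : ∀ w ∈ P1.support, w ∈ P.support := fun w hw => ((hmemP1 w).mp hw).1
  have hQ1Q : ∀ w ∈ Q1.support, w ∈ Q.support := fun w hw => ((hmemQ1 w).mp hw).1
  have hPH : ∀ w ∈ P.support, w ∈ H := by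
    intro w h
    have : w ∈ supp P ∪ supp Q := Or.inl h
    rwa [hunion] at this
  have hQH : ∀ w ∈ Q.support, w ∈ H := by
    intro w h
    have : w ∈ supp P ∪ supp Q := Or.inr h
    rwa [hunion] at this
  -- u's neighbors lie in P1
  have hNuP1 : ∀ w, w ∈ nbrsIn G u H → w ∈ P1.support := by
    rintro w ⟨hwH, hwadj⟩
    rw [hmemP1]
    refine ⟨hNuP w hwH hwadj, ?_, ?_⟩
    · rintro h rfl; exact hA2 h hwadj
    · rintro h rfl; exact hB2 h hwadj
  have hNvQ1 : ∀ w, w ∈ nbrsIn G v H → w ∈ Q1.support := by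
    rintro w ⟨hwH, hwadj⟩
    rw [hmemQ1]
    refine ⟨hNvQ w hwH hwadj, ?_, ?_⟩
    · rw [Bool.not_eq_false']
      rintro h rfl; exact hA1 h hwadj
    · rw [Bool.not_eq_false']
      rintro h rfl; exact hB1 h hwadj
  -- disjointness
  have hdisj : ∀ w, w ∈ P1.support → w ∉ Q1.support := by
    intro w hw1 hw2
    rw [hmemP1] at hw1
    rw [hmemQ1] at hw2
    rcases hPQ w hw1.1 hw2.1 with rfl | rfl
    · cases kA
      · exact hw1.2.1 rfl rfl
      · exact hw2.2.1 rfl rfl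
    · cases kB
      · exact hw1.2.2 rfl rfl
      · exact hw2.2.2 rfl rfl
  -- union is H
  have hU : supp P1 ∪ supp Q1 = H := by
    ext w
    constructor
    · rintro (h | h)
      · exact hPH w (hP1P w h)
      · exact hQH w (hQ1Q w h)
    · intro hw
      have : w ∈ supp P ∪ supp Q := by rw [hunion]; exact hw
      rcases this with h | h
      · by_cases hc1 : kA = false ∧ w = a
        · obtain ⟨hk, rfl⟩ := hc1
          refine Or.inr ((hmemQ1 w).mpr ⟨Q.start_mem_support, ?_, fun _ h' => hab h'⟩)
          intro h'
          rw [hk] at h'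
          simp at h'
        · by_cases hc2 : kB = false ∧ w = b
          · obtain ⟨hk, rfl⟩ := hc2
            refine Or.inr ((hmemQ1 w).mpr ⟨Q.end_mem_support, fun _ h' => hab h'.symm, ?_⟩)
            intro h'
            rw [hk] at h'
            simp at h'
          · exact Or.inl ((hmemP1 w).mpr
              ⟨h, fun hk heq => hc1 ⟨hk, heq⟩, fun hk heq => hc2 ⟨hk, heq⟩⟩)
      · by_cases hc1 : (!kA) = false ∧ w = a
        · obtain ⟨hk, rfl⟩ := hc1
          rw [Bool.not_eq_false'] at hk
          refine Or.inl ((hmemP1 w).mpr ⟨P.start_mem_support, ?_, fun _ h' => hab h'⟩)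
          intro h'
          rw [h'] at hk
          simp at hk
        · by_cases hc2 : (!kB) = false ∧ w = b
          · obtain ⟨hk, rfl⟩ := hc2
            rw [Bool.not_eq_false'] at hk
            refine Or.inl ((hmemP1 w).mpr ⟨P.end_mem_support, fun _ h' => hab h'.symm, ?_⟩)
            intro h'
            rw [h'] at hk
            simp at hk
          · exact Or.inr ((hmemQ1 w).mpr
              ⟨h, fun hk heq => hc1 ⟨hk, heq⟩, fun hk heq => hc2 ⟨hk, heq⟩⟩)
  -- edges
  have hedge_a : G.Adj a1 a2 := by
    cases kA
    · have h1 := hP1a' rfl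
      have h2 := hQ1a rfl
      rw [h2]
      exact h1.symm
    · have h1 := hP1a rfl
      have h2 := hQ1a' rfl
      rw [h1]
      exact h2
  have hedge_b : G.Adj b1 b2 := by
    cases kB
    · have h1 := hP1b' rfl
      have h2 := hQ1b rfl
      rw [h2]
      exact h1.symm
    · have h1 := hP1b rfl
      have h2 := hQ1b' rfl
      rw [h1]
      exact h2
  -- neighbor sets restricted
  have hNuEq : nbrsIn G u (supp P1) = nbrsIn G u H := by
    ext w
    constructor
    · rintro ⟨hw, hadj⟩
      exact ⟨hPH w (hP1P w hw), hadj⟩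
    · intro hw
      exact ⟨hNuP1 w hw, hw.2⟩
  have hNvEq : nbrsIn G v (supp Q1) = nbrsIn G v H := by
    ext w
    constructor
    · rintro ⟨hw, hadj⟩
      exact ⟨hQH w (hQ1Q w hw), hadj⟩
    · intro hw
      exact ⟨hNvQ1 w hw, hw.2⟩
  refine ⟨a1, b1, a2, b2, u, v, P1, Q1, hP1, hQ1, hdisj, hedge_a, hedge_b, huv,
    fun h => huH (hPH _ (hP1P _ h)), fun h => huH (hQH _ (hQ1Q _ h)),
    fun h => hvH (hPH _ (hP1P _ h)), fun h => hvH (hQH _ (hQ1Q _ h)),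
    by rw [hU]; exact hH, by rw [hNuEq]; exact hNu3, ?_,
    by rw [hNvEq]; exact hNv3, ?_⟩
  · intro w hw hadj
    exact hdisj w (hNuP1 w ⟨hQH w (hQ1Q w hw), hadj⟩) hw
  · intro w hw hadj
    exact (hdisj w hw) (hNvQ1 w ⟨hPH w (hP1P w hw), hadj⟩)


end Helpers

/-- In a (theta, pyramid, prism, turtle)-free graph, if `u` and `v` are each
major for a hole `H` or clones in `H`, are nested with respect to `H`, and
`uv ∈ E(G)`, then `u` and `v` have a common neighbor in `H`. -/
theorem nested_adjacent_common_neighbor {V : Type*} (G : SimpleGraph V)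
    (hG : TPPTFree G) (H : Set V) (hH : IsHole G H) (u v : V)
    (hu : IsMajorFor G u H ∨ IsClone G u H)
    (hv : IsMajorFor G v H ∨ IsClone G v H)
    (hnest : Nested G u v H) (huv : G.Adj u v) :
    ∃ w ∈ H, G.Adj u w ∧ G.Adj v w := by
  classical
  by_contra hcom
  push_neg at hcom
  obtain ⟨a, b, haH, hbH, hab, P, Q, hP, hQ, hunion, hPQ, hNuP, hNvQ⟩ := hnest
  have huH : u ∉ H := by
    rcases hu with h | ⟨y, h⟩
    · exact h.1
    · exact h.1
  have hvH : v ∉ H := by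
    rcases hv with h | ⟨y, h⟩
    · exact h.1
    · exact h.1
  have hNu3 := nbrs_ge_three hG.1 hH P Q hP hQ hPQ hunion hu hNuP
  have hPQ' : ∀ x, x ∈ Q.support → x ∈ P.support → x = a ∨ x = b :=
    fun x h1 h2 => hPQ x h2 h1
  have hunion' : supp Q ∪ supp P = H := by rw [Set.union_comm]; exact hunion
  have hNv3 := nbrs_ge_three hG.1 hH Q P hQ hP hPQ' hunion' hv hNvQ
  by_cases hva : G.Adj v a <;> by_cases hvb : G.Adj v b
  · exact hG.2.2.2 (hasTurtle_main hH P Q hP hQ hab hPQ hunion huH hvH huv hNuP hNvQ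
      hNu3 hNv3 false false (by simp) (fun _ hua => hcom a haH hua hva)
      (by simp) (fun _ hub => hcom b hbH hub hvb))
  · exact hG.2.2.2 (hasTurtle_main hH P Q hP hQ hab hPQ hunion huH hvH huv hNuP hNvQ
      hNu3 hNv3 false true (by simp) (fun _ hua => hcom a haH hua hva)
      (fun _ => hvb) (by simp))
  · exact hG.2.2.2 (hasTurtle_main hH P Q hP hQ hab hPQ hunion huH hvH huv hNuP hNvQ
      hNu3 hNv3 true false (fun _ => hva) (by simp)
      (by simp) (fun _ hub => hcom b hbH hub hvb))
  · exact hG.2.2.2 (hasTurtle_main hH P Q hP hQ hab hPQ hunion huH hvH huv hNuP hNvQ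
      hNu3 hNv3 true true (fun _ => hva) (by simp)
      (fun _ => hvb) (by simp))


end Paper
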